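/- Let γ be a nonnegative absolutely continuous random variable with CDF F. Then for every p > 0, E[Q(√(p γ))] = (√p / (2√(2π))) ∫_0^∞ e^{-pt/2} F(t) t^{-1/2} dt. -/

import Mathlib

open MeasureTheory Real intervalIntegral

/-- The Gaussian Q-function. -/
noncomputable def gaussQ (x : ℝ) : ℝ :=
  (Real.sqrt (2 * Real.pi))⁻¹ * ∫ t in Set.Ioi x, Real.exp (-t ^ 2 / 2)

lemma aux_gauss_int : Integrable (fun t : ℝ => Real.exp (-t ^ 2 / 2)) := by
  have := integrable_exp_neg_mul_sq (show (0:ℝ) < 1/2 by norm_num)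
  exact this.congr (by filter_upwards with t; ring_nf)

lemma gaussQ_anti : Antitone gaussQ := by
  intro a b hab
  refine mul_le_mul_of_nonneg_left ?_ (by positivity)
  refine setIntegral_mono_set (aux_gauss_int.integrableOn) ?_ ?_
  · filter_upwards with t using (Real.exp_pos _).le
  · exact HasSubset.Subset.eventuallyLE (Set.Ioi_subset_Ioi hab)

lemma gaussQ_nonneg (x : ℝ) : 0 ≤ gaussQ x := by
  have : 0 ≤ ∫ t in Set.Ioi x, Real.exp (-t ^ 2 / 2) :=
    integral_nonneg fun t => (Real.exp_pos _).le
  unfold gaussQ; positivity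

lemma aux_image (p x : ℝ) (hp : 0 < p) (hx : 0 ≤ x) :
    (fun t => Real.sqrt (p * t)) '' Set.Ioi x = Set.Ioi (Real.sqrt (p * x)) := by
  ext s
  simp only [Set.mem_image, Set.mem_Ioi]
  constructor
  · rintro ⟨t, ht, rfl⟩
    exact Real.sqrt_lt_sqrt (by positivity) (by nlinarith)
  · intro hs
    have hs0 : 0 < s := lt_of_le_of_lt (Real.sqrt_nonneg _) hs
    refine ⟨s ^ 2 / p, ?_, ?_⟩
    · rw [lt_div_iff₀ hp]
      have := Real.sq_sqrt (show (0:ℝ) ≤ p * x by positivity)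
      nlinarith [Real.sqrt_nonneg (p * x), mul_self_lt_mul_self (Real.sqrt_nonneg (p*x)) hs]
    · rw [mul_div_cancel₀ _ hp.ne', Real.sqrt_sq hs0.le]

lemma gaussQ_eq (p : ℝ) (hp : 0 < p) (x : ℝ) (hx : 0 < x) :
    gaussQ (Real.sqrt (p * x)) = ∫ t in Set.Ioi x,
      Real.sqrt p / (2 * Real.sqrt (2 * Real.pi)) * (Real.exp (-(p * t) / 2) * (Real.sqrt t)⁻¹) := by
  have hderiv : ∀ t ∈ Set.Ioi x, HasDerivWithinAt (fun t => Real.sqrt (p * t))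
      (p / (2 * Real.sqrt (p * t))) (Set.Ioi x) t := by
    intro t ht
    have ht0 : 0 < t := hx.trans ht
    have h1 : HasDerivAt (fun t : ℝ => Real.sqrt (p * t)) (1 / (2 * Real.sqrt (p * t)) * p) t := by
      have := (Real.hasDerivAt_sqrt (show p * t ≠ 0 by positivity)).comp t
        ((hasDerivAt_id t).const_mul p)
      simpa [Function.comp_def] using this
    have : 1 / (2 * Real.sqrt (p * t)) * p = p / (2 * Real.sqrt (p * t)) := by ring
    exact (this ▸ h1).hasDerivWithinAt
  have hinj : Set.InjOn (fun t => Real.sqrt (p * t)) (Set.Ioi x) := by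
    intro a ha b hb hab
    have ha0 : 0 < a := hx.trans ha
    have hb0 : 0 < b := hx.trans hb
    have := (Real.sqrt_inj (by positivity : (0:ℝ) ≤ p*a) (by positivity : (0:ℝ) ≤ p*b)).mp hab
    exact mul_left_cancel₀ hp.ne' this
  unfold gaussQ
  rw [← aux_image p x hp hx.le,
    integral_image_eq_integral_abs_deriv_smul measurableSet_Ioi hderiv hinj
      (fun s => Real.exp (-s ^ 2 / 2)), ← MeasureTheory.integral_const_mul]
  refine setIntegral_congr_fun measurableSet_Ioi fun t ht => ?_
  have ht0 : 0 < t := hx.trans ht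
  have hsq : Real.sqrt (p * t) ^ 2 = p * t := Real.sq_sqrt (by positivity)
  have habs : |p / (2 * Real.sqrt (p * t))| = p / (2 * Real.sqrt (p * t)) :=
    abs_of_pos (by positivity)
  rw [smul_eq_mul, habs, hsq]
  have hmul : Real.sqrt (p * t) = Real.sqrt p * Real.sqrt t := Real.sqrt_mul hp.le t
  rw [hmul]
  have h2 : Real.sqrt p * Real.sqrt p = p := Real.mul_self_sqrt hp.le
  have hsp : 0 < Real.sqrt p := Real.sqrt_pos.mpr hp
  have hst : 0 < Real.sqrt t := Real.sqrt_pos.mpr ht0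
  have h2pi : 0 < Real.sqrt (2 * Real.pi) := Real.sqrt_pos.mpr (by positivity)
  field_simp
  linear_combination (-1 : ℝ) * h2

theorem stmt5 (f : ℝ → ℝ) (hfmeas : Measurable f) (hfpos : ∀ t, 0 ≤ f t)
    (hfint : IntegrableOn f (Set.Ioi 0))
    (hfprob : (∫ t in Set.Ioi (0 : ℝ), f t) = 1)
    (F : ℝ → ℝ) (hF : ∀ t, F t = ∫ u in (0 : ℝ)..t, f u)
    (p : ℝ) (hp : 0 < p) :
    (∫ x in Set.Ioi (0 : ℝ), gaussQ (Real.sqrt (p * x)) * f x) =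
      (Real.sqrt p / (2 * Real.sqrt (2 * Real.pi))) *
        ∫ t in Set.Ioi (0 : ℝ), Real.exp (-(p * t) / 2) * F t * t ^ (-(1 : ℝ) / 2) := by
  have hrpow : ∀ t : ℝ, 0 < t → t ^ (-(1:ℝ) / 2) = (Real.sqrt t)⁻¹ := by
    intro t ht0
    rw [show (-(1:ℝ)/2) = -(1/2) by ring, Real.rpow_neg ht0.le, ← Real.sqrt_eq_rpow]
  set c : ℝ := Real.sqrt p / (2 * Real.sqrt (2 * Real.pi)) with hc
  have hc0 : 0 ≤ c := by rw [hc]; positivity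
  set G : ℝ → ℝ := fun t => c * (Real.exp (-(p * t) / 2) * (Real.sqrt t)⁻¹) with hG
  have hGmeas : Measurable G := by
    apply Measurable.const_mul
    exact (Real.measurable_exp.comp ((measurable_id.const_mul p).neg.div_const 2)).mul
      Real.continuous_sqrt.measurable.inv
  have hGnn : ∀ t : ℝ, 0 ≤ G t := fun t =>
    mul_nonneg hc0 (mul_nonneg (Real.exp_pos _).le (inv_nonneg.mpr (Real.sqrt_nonneg t)))
  have hGint : IntegrableOn G (Set.Ioi 0) := by
    have h := integrableOn_rpow_mul_exp_neg_mul_rpow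
      (show (-1:ℝ) < -(1:ℝ)/2 by norm_num) (show (0:ℝ) < 1 by norm_num) (show (0:ℝ) < p/2 by positivity)
    refine IntegrableOn.congr_fun (f := fun x : ℝ => c * (x ^ (-(1:ℝ)/2) * Real.exp (-(p/2) * x ^ (1:ℝ)))) (h.const_mul c) (fun t ht => ?_) measurableSet_Ioi
    have ht0 : (0:ℝ) < t := ht
    rw [hG]
    simp only [Real.rpow_one]
    rw [hrpow t ht0]
    ring_nf
  -- monotonicity / measurability of F on Ioi 0
  have hFmono : MonotoneOn F (Set.Ioi 0) := by
    intro a ha b hb hab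
    have ha0 : (0:ℝ) < a := ha
    have h1 : IntervalIntegrable f volume 0 a :=
      (intervalIntegrable_iff_integrableOn_Ioc_of_le ha0.le).mpr
        (hfint.mono_set Set.Ioc_subset_Ioi_self)
    have h2 : IntervalIntegrable f volume a b :=
      (intervalIntegrable_iff_integrableOn_Ioc_of_le hab).mpr
        (hfint.mono_set ((Set.Ioc_subset_Ioi_self).trans (Set.Ioi_subset_Ioi ha0.le)))
    rw [hF a, hF b, ← intervalIntegral.integral_add_adjacent_intervals h1 h2]
    have : 0 ≤ ∫ u in a..b, f u := intervalIntegral.integral_nonneg hab fun u _ => hfpos u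
    linarith
  have hFsm : AEMeasurable F (volume.restrict (Set.Ioi 0)) :=
    aemeasurable_restrict_of_monotoneOn measurableSet_Ioi hFmono
  have hFnn : ∀ t ∈ Set.Ioi (0:ℝ), 0 ≤ F t := fun t ht => by
    rw [hF]
    exact intervalIntegral.integral_nonneg (le_of_lt ht) fun u _ => hfpos u
  -- key pointwise conversion for F
  have hFlin : ∀ t ∈ Set.Ioi (0:ℝ),
      ENNReal.ofReal (F t) = ∫⁻ x in Set.Ioo 0 t, ENNReal.ofReal (f x) := by
    intro t ht
    have hfi : IntegrableOn f (Set.Ioc 0 t) := hfint.mono_set Set.Ioc_subset_Ioi_self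
    rw [hF, intervalIntegral.integral_of_le (le_of_lt ht),
      ofReal_integral_eq_lintegral_ofReal hfi (Filter.Eventually.of_forall fun u => hfpos u),
      ← Measure.restrict_congr_set Ioo_ae_eq_Ioc]
  -- the product kernel
  set H : ℝ → ℝ → ENNReal := fun x t =>
    ENNReal.ofReal (f x) * ENNReal.ofReal (G t) *
      Set.indicator {q : ℝ × ℝ | q.1 < q.2} 1 (x, t) with hH
  have hHmeas : Measurable (Function.uncurry H) := by
    apply Measurable.mul
    · exact ((hfmeas.comp measurable_fst).ennreal_ofReal).mul
        ((hGmeas.comp measurable_snd).ennreal_ofReal)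
    · exact (measurable_one.indicator (measurableSet_lt measurable_fst measurable_snd))
  have step1 : ∀ x ∈ Set.Ioi (0:ℝ),
      (∫⁻ t in Set.Ioi (0:ℝ), H x t) =
        ENNReal.ofReal (f x) * ∫⁻ t in Set.Ioi x, ENNReal.ofReal (G t) := by
    intro x hx
    have hx0 : (0:ℝ) < x := hx
    have heq : ∀ t : ℝ, H x t =
        (Set.Ioi x).indicator (fun t => ENNReal.ofReal (f x) * ENNReal.ofReal (G t)) t := by
      intro t
      rw [hH]
      by_cases h : x < t
      · simp [Set.indicator_of_mem, h, Set.mem_Ioi]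
      · simp [Set.indicator_of_notMem, h, Set.mem_Ioi]
    simp only [heq]
    rw [lintegral_indicator measurableSet_Ioi, Measure.restrict_restrict measurableSet_Ioi,
      Set.Ioi_inter_Ioi, max_eq_left hx0.le,
      lintegral_const_mul _ hGmeas.ennreal_ofReal]
  have step2 : ∀ t ∈ Set.Ioi (0:ℝ),
      (∫⁻ x in Set.Ioi (0:ℝ), H x t) =
        (∫⁻ x in Set.Ioo 0 t, ENNReal.ofReal (f x)) * ENNReal.ofReal (G t) := by
    intro t ht
    have heq : ∀ x : ℝ, H x t =
        (Set.Iio t).indicator (fun x => ENNReal.ofReal (f x) * ENNReal.ofReal (G t)) x := by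
      intro x
      rw [hH]
      by_cases h : x < t
      · simp [Set.indicator_of_mem, h, Set.mem_Iio]
      · simp [Set.indicator_of_notMem, h, Set.mem_Iio]
    simp only [heq]
    rw [lintegral_indicator measurableSet_Iio, Measure.restrict_restrict measurableSet_Iio,
      Set.Iio_inter_Ioi, lintegral_mul_const _ hfmeas.ennreal_ofReal]
  -- now the main chain
  have lhs_eq : (∫ x in Set.Ioi (0 : ℝ), gaussQ (Real.sqrt (p * x)) * f x) =
      (∫⁻ x in Set.Ioi (0:ℝ), ENNReal.ofReal (gaussQ (Real.sqrt (p * x)) * f x)).toReal := by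
    refine integral_eq_lintegral_of_nonneg_ae
      (Filter.Eventually.of_forall fun x => mul_nonneg (gaussQ_nonneg _) (hfpos x)) ?_
    exact ((gaussQ_anti.measurable.comp
      (Real.continuous_sqrt.measurable.comp (measurable_id.const_mul p))).mul
      hfmeas).aestronglyMeasurable
  have key : (∫⁻ x in Set.Ioi (0:ℝ), ENNReal.ofReal (gaussQ (Real.sqrt (p * x)) * f x)) =
      ∫⁻ t in Set.Ioi (0:ℝ), ENNReal.ofReal (G t * F t) := by
    have e1 : (∫⁻ x in Set.Ioi (0:ℝ), ENNReal.ofReal (gaussQ (Real.sqrt (p * x)) * f x)) =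
        ∫⁻ x in Set.Ioi (0:ℝ), ∫⁻ t in Set.Ioi (0:ℝ), H x t := by
      refine setLIntegral_congr_fun measurableSet_Ioi
        (fun x hx => ?_)
      have hx0 : (0:ℝ) < x := hx
      rw [step1 x hx, gaussQ_eq p hp x hx0]
      have hGx : IntegrableOn G (Set.Ioi x) := hGint.mono_set (Set.Ioi_subset_Ioi hx0.le)
      rw [ENNReal.ofReal_mul (setIntegral_nonneg measurableSet_Ioi fun t _ => hGnn t),
        ofReal_integral_eq_lintegral_ofReal hGx
          (Filter.Eventually.of_forall fun t => hGnn t), mul_comm]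
    have e2 : (∫⁻ t in Set.Ioi (0:ℝ), ∫⁻ x in Set.Ioi (0:ℝ), H x t) =
        ∫⁻ t in Set.Ioi (0:ℝ), ENNReal.ofReal (G t * F t) := by
      refine setLIntegral_congr_fun measurableSet_Ioi
        (fun t ht => ?_)
      rw [step2 t ht, ← hFlin t ht, ENNReal.ofReal_mul (hGnn t), mul_comm]
    rw [e1, lintegral_lintegral_swap hHmeas.aemeasurable, e2]
  have rhs_eq : (∫⁻ t in Set.Ioi (0:ℝ), ENNReal.ofReal (G t * F t)).toReal =
      ∫ t in Set.Ioi (0:ℝ), G t * F t := by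
    refine (integral_eq_lintegral_of_nonneg_ae ?_ ?_).symm
    · filter_upwards [self_mem_ae_restrict measurableSet_Ioi] with t ht
      exact mul_nonneg (hGnn t) (hFnn t ht)
    · exact (hGmeas.aemeasurable.restrict.mul hFsm).aestronglyMeasurable
  rw [lhs_eq, key, rhs_eq, ← MeasureTheory.integral_const_mul]
  refine setIntegral_congr_fun measurableSet_Ioi fun t ht => ?_
  have ht0 : (0:ℝ) < t := ht
  rw [hG, hrpow t ht0]
  ring
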